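/- Let N_k, N_m be positive reals. The pairwise log-likelihood g(f_k, f_m) = N_k · log(e^{f_k}/(e^{f_k}+e^{f_m})) + N_m · log(e^{f_m}/(e^{f_k}+e^{f_m})) is globally maximized over (f_k, f_m) ∈ ℝ² exactly when f_k - f_m = log(N_k/N_m); in particular f_k = log N_k + c, f_m = log N_m + c is a global maximizer for every c ∈ ℝ. -/

import Mathlib

open Real

private lemma aux_le (Nk Nm p : ℝ) (hNk : 0 < Nk) (hNm : 0 < Nm)
    (hp : 0 < p) (hp1 : p < 1) :
    Nk * Real.log p + Nm * Real.log (1 - p) ≤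
      Nk * Real.log (Nk / (Nk + Nm)) + Nm * Real.log (Nm / (Nk + Nm)) := by
  have hs : 0 < Nk + Nm := by linarith
  have h1 : Real.log (p / (Nk / (Nk + Nm))) ≤ p / (Nk / (Nk + Nm)) - 1 :=
    Real.log_le_sub_one_of_pos (div_pos (by linarith) (by positivity))
  have h2 : Real.log ((1 - p) / (Nm / (Nk + Nm))) ≤ (1 - p) / (Nm / (Nk + Nm)) - 1 :=
    Real.log_le_sub_one_of_pos (div_pos (by linarith) (by positivity))
  rw [Real.log_div hp.ne' (by positivity)] at h1
  rw [Real.log_div (by linarith) (by positivity)] at h2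
  have e1 : Nk * (p / (Nk / (Nk + Nm))) = (Nk + Nm) * p := by field_simp
  have e2 : Nm * ((1 - p) / (Nm / (Nk + Nm))) = (Nk + Nm) * (1 - p) := by
    field_simp
  nlinarith [mul_le_mul_of_nonneg_left h1 hNk.le, mul_le_mul_of_nonneg_left h2 hNm.le]

private lemma aux_lt (Nk Nm p : ℝ) (hNk : 0 < Nk) (hNm : 0 < Nm)
    (hp : 0 < p) (hp1 : p < 1) (hne : p ≠ Nk / (Nk + Nm)) :
    Nk * Real.log p + Nm * Real.log (1 - p) <
      Nk * Real.log (Nk / (Nk + Nm)) + Nm * Real.log (Nm / (Nk + Nm)) := by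
  have hs : 0 < Nk + Nm := by linarith
  have hr1 : p / (Nk / (Nk + Nm)) ≠ 1 := by
    intro h
    apply hne
    field_simp at h
    field_simp
    linarith
  have hr2 : (1 - p) / (Nm / (Nk + Nm)) ≠ 1 := by
    intro h
    apply hne
    field_simp at h
    field_simp
    linarith
  have h1 : Real.log (p / (Nk / (Nk + Nm))) < p / (Nk / (Nk + Nm)) - 1 :=
    Real.log_lt_sub_one_of_pos (div_pos (by linarith) (by positivity)) hr1
  have h2 : Real.log ((1 - p) / (Nm / (Nk + Nm))) < (1 - p) / (Nm / (Nk + Nm)) - 1 :=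
    Real.log_lt_sub_one_of_pos (div_pos (by linarith) (by positivity)) hr2
  rw [Real.log_div hp.ne' (by positivity)] at h1
  rw [Real.log_div (by linarith) (by positivity)] at h2
  have e1 : Nk * (p / (Nk / (Nk + Nm))) = (Nk + Nm) * p := by field_simp
  have e2 : Nm * ((1 - p) / (Nm / (Nk + Nm))) = (Nk + Nm) * (1 - p) := by
    field_simp
  nlinarith [mul_lt_mul_of_pos_left h1 hNk, mul_lt_mul_of_pos_left h2 hNm]

/-- The pairwise log-likelihood
`g (a, b) = N_k log (e^a / (e^a + e^b)) + N_m log (e^b / (e^a + e^b))`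
is globally maximized exactly when `a - b = log (N_k / N_m)`; in particular
`a = log N_k + c`, `b = log N_m + c` is a global maximizer for every `c`. -/
theorem pairwise_likelihood_optimal (Nk Nm : ℝ) (hNk : 0 < Nk) (hNm : 0 < Nm)
    (g : ℝ → ℝ → ℝ)
    (hg : ∀ a b, g a b = Nk * Real.log (Real.exp a / (Real.exp a + Real.exp b)) +
      Nm * Real.log (Real.exp b / (Real.exp a + Real.exp b))) :
    (∀ a b : ℝ, (∀ x y : ℝ, g x y ≤ g a b) ↔ a - b = Real.log (Nk / Nm)) ∧
    (∀ c : ℝ, ∀ x y : ℝ, g x y ≤ g (Real.log Nk + c) (Real.log Nm + c)) := by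
  have hs : 0 < Nk + Nm := by linarith
  -- g in terms of p = e^x / (e^x + e^y)
  have gval : ∀ x y : ℝ, g x y =
      Nk * Real.log (Real.exp x / (Real.exp x + Real.exp y)) +
      Nm * Real.log (1 - Real.exp x / (Real.exp x + Real.exp y)) := by
    intro x y
    have hxy : 0 < Real.exp x + Real.exp y := by positivity
    have : 1 - Real.exp x / (Real.exp x + Real.exp y)
        = Real.exp y / (Real.exp x + Real.exp y) := by
      field_simp
      ring
    rw [hg, this]
  have hp : ∀ x y : ℝ, 0 < Real.exp x / (Real.exp x + Real.exp y) ∧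
      Real.exp x / (Real.exp x + Real.exp y) < 1 := by
    intro x y
    have hxy : 0 < Real.exp x + Real.exp y := by positivity
    constructor
    · positivity
    · rw [div_lt_one hxy]; linarith [Real.exp_pos y]
  -- value at an optimal point
  have gopt : ∀ a b : ℝ, Real.exp a / (Real.exp a + Real.exp b) = Nk / (Nk + Nm) →
      g a b = Nk * Real.log (Nk / (Nk + Nm)) + Nm * Real.log (Nm / (Nk + Nm)) := by
    intro a b h
    rw [gval, h]
    have : 1 - Nk / (Nk + Nm) = Nm / (Nk + Nm) := by field_simp; ring
    rw [this]
  have key : ∀ x y : ℝ, g x y ≤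
      Nk * Real.log (Nk / (Nk + Nm)) + Nm * Real.log (Nm / (Nk + Nm)) := by
    intro x y
    rw [gval]
    exact aux_le Nk Nm _ hNk hNm (hp x y).1 (hp x y).2
  -- the ratio condition
  have ratio : ∀ a b : ℝ, a - b = Real.log (Nk / Nm) ↔
      Real.exp a / (Real.exp a + Real.exp b) = Nk / (Nk + Nm) := by
    intro a b
    have hea : (0:ℝ) < Real.exp a := Real.exp_pos a
    have heb : (0:ℝ) < Real.exp b := Real.exp_pos b
    constructor
    · intro h
      have h2 : Real.exp (a - b) = Nk / Nm := by
        rw [h, Real.exp_log (by positivity)]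
      rw [Real.exp_sub] at h2
      have h3 : Real.exp a * Nm = Nk * Real.exp b := by
        field_simp at h2
        linarith
      field_simp
      nlinarith
    · intro h
      have h3 : Real.exp a * Nm = Nk * Real.exp b := by
        field_simp at h
        nlinarith
      have h2 : Real.exp (a - b) = Nk / Nm := by
        rw [Real.exp_sub]
        field_simp
        linarith
      have := congrArg Real.log h2
      rwa [Real.log_exp] at this
  constructor
  · intro a b
    constructor
    · intro H
      by_contra hne
      have hpn : Real.exp a / (Real.exp a + Real.exp b) ≠ Nk / (Nk + Nm) := by
        intro h
        exact hne ((ratio a b).2 h)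
      have hlt : g a b < Nk * Real.log (Nk / (Nk + Nm)) + Nm * Real.log (Nm / (Nk + Nm)) := by
        rw [gval]
        exact aux_lt Nk Nm _ hNk hNm (hp a b).1 (hp a b).2 hpn
      -- but g at (log Nk, log Nm) attains the optimum, contradiction with H
      have hopt : Real.exp (Real.log Nk) / (Real.exp (Real.log Nk) + Real.exp (Real.log Nm))
          = Nk / (Nk + Nm) := by
        rw [Real.exp_log hNk, Real.exp_log hNm]
      have := H (Real.log Nk) (Real.log Nm)
      rw [gopt _ _ hopt] at this
      linarith
    · intro h
      intro x y
      rw [gopt a b ((ratio a b).1 h)]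
      exact key x y
  · intro c x y
    have hopt : Real.exp (Real.log Nk + c) / (Real.exp (Real.log Nk + c) + Real.exp (Real.log Nm + c))
        = Nk / (Nk + Nm) := by
      rw [Real.exp_add, Real.exp_add, Real.exp_log hNk, Real.exp_log hNm]
      have hc : (0:ℝ) < Real.exp c := Real.exp_pos c
      field_simp
    rw [gopt _ _ hopt]
    exact key x y
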